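/- Let H be a finite Heyting algebra, M a Heyting module over H, and 𝒦 = {K_c}_{c∈H} a hereditary system of submodules of M. Define φ_𝒦(m) := ⋀{d ∈ H | m ∈ K_d}. Then φ_𝒦 : M → H is a morphism of Heyting modules: it preserves finite joins and satisfies φ_𝒦(c ∧ m) = c ∧ φ_𝒦(m) for all c ∈ H, m ∈ M. -/

import Mathlib

universe u

/-- A distributive module over a bounded lattice `L`. -/
structure DistribModule (L : Type u) [Lattice L] [OrderTop L] [OrderBot L]
    (M : Type u) [SemilatticeSup M] [OrderBot M] where
  smul : L → M → M
  smul_mono_left : ∀ ⦃x y : L⦄ (m : M), x ≤ y → smul x m ≤ smul y m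
  smul_mono_right : ∀ (x : L) ⦃m n : M⦄, m ≤ n → smul x m ≤ smul x n
  top_smul : ∀ m : M, smul ⊤ m = m
  bot_smul : ∀ m : M, smul ⊥ m = ⊥
  inf_smul : ∀ (x y : L) (m : M), smul (x ⊓ y) m = smul x (smul y m)
  sup_smul : ∀ (x y : L) (m : M), smul (x ⊔ y) m = smul x m ⊔ smul y m
  smul_sup : ∀ (x : L) (m n : M), smul x (m ⊔ n) = smul x m ⊔ smul x n

/-- A Heyting module over a Heyting algebra `H`: a distributive module such that each
action map `x ↦ x ∧ m` has a right adjoint `(m → -)_M : M → H`. -/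
structure HeytingModule (H : Type u) [HeytingAlgebra H]
    (M : Type u) [SemilatticeSup M] [OrderBot M] extends DistribModule H M where
  mimp : M → M → H
  smul_le_iff : ∀ (x : H) (m n : M), smul x m ≤ n ↔ x ≤ mimp m n

/-- A morphism of (distributive/Heyting) modules: preserves `⊥`, finite joins and the action. -/
def IsHom {L : Type u} [Lattice L] [OrderTop L] [OrderBot L]
    {M N : Type u} [SemilatticeSup M] [OrderBot M] [SemilatticeSup N] [OrderBot N]
    (DM : DistribModule L M) (DN : DistribModule L N) (f : M → N) : Prop :=
  f ⊥ = ⊥ ∧ (∀ m m' : M, f (m ⊔ m') = f m ⊔ f m') ∧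
    ∀ (x : L) (m : M), f (DM.smul x m) = DN.smul x (f m)

/-- A hereditary submodule: a downward-closed sub-join-semilattice containing `⊥`. -/
def Hereditary {M : Type u} [SemilatticeSup M] [OrderBot M] (S : Set M) : Prop :=
  ⊥ ∈ S ∧ (∀ m n : M, m ∈ S → n ∈ S → m ⊔ n ∈ S) ∧ ∀ m n : M, n ∈ S → m ≤ n → m ∈ S

open scoped Classical

/-- Over a finite Heyting algebra, a hereditary system of submodules `{K_c}` gives rise
to a morphism of Heyting modules `φ(m) = ⋀ {d | m ∈ K_d}`. -/
theorem hom_of_hereditary_system (H : Type u) [HeytingAlgebra H] [Fintype H]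
    (M : Type u) [SemilatticeSup M] [OrderBot M] (HM : HeytingModule H M)
    (K : H → Set M) (hher : ∀ c : H, Hereditary (K c))
    (hinter : ∀ c d : H, K c ∩ K d = K (c ⊓ d))
    (hquot : ∀ c d : H, {m : M | HM.smul c m ∈ K d} = K (c ⇨ d))
    (φ : M → H)
    (hφ : ∀ m : M, φ m = (Finset.univ.filter fun d : H => m ∈ K d).inf id) :
    φ ⊥ = ⊥ ∧ (∀ m n : M, φ (m ⊔ n) = φ m ⊔ φ n) ∧
      ∀ (c : H) (m : M), φ (HM.smul c m) = c ⊓ φ m := by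
  -- monotonicity of K
  have hmono : ∀ ⦃c d : H⦄, c ≤ d → K c ⊆ K d := by
    intro c d h
    have : K c = K c ∩ K d := by rw [hinter, inf_eq_left.mpr h]
    rw [this]; exact Set.inter_subset_right
  -- everything is in K ⊤
  have htop : ∀ m : M, m ∈ K ⊤ := by
    intro m
    have h1 : HM.smul ⊥ m ∈ K ⊤ := by rw [HM.bot_smul]; exact (hher ⊤).1
    have h2 : m ∈ {m : M | HM.smul ⊥ m ∈ K ⊤} := h1
    rw [hquot] at h2
    simpa using h2
  -- m ∈ K (φ m)
  have hmem : ∀ m : M, m ∈ K (φ m) := by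
    intro m
    rw [hφ]
    have key : ∀ s : Finset H, (∀ d ∈ s, m ∈ K d) → m ∈ K (s.inf id) := by
      intro s
      induction s using Finset.induction with
      | empty => intro _; simpa using htop m
      | insert _ _ hnotmem ih =>
          intro hs
          rw [Finset.inf_insert, ← hinter]
          exact ⟨hs _ (Finset.mem_insert_self _ _),
            ih fun d hd => hs d (Finset.mem_insert_of_mem hd)⟩
    exact key _ fun d hd => (Finset.mem_filter.mp hd).2
  have hle : ∀ (m : M) (d : H), m ∈ K d → φ m ≤ d := by
    intro m d hd
    rw [hφ]
    exact Finset.inf_le (by simp [hd])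
  have hiff : ∀ (m : M) (d : H), φ m ≤ d ↔ m ∈ K d := by
    intro m d
    exact ⟨fun h => hmono h (hmem m), hle m d⟩
  refine ⟨?_, ?_, ?_⟩
  · exact le_antisymm (hle ⊥ ⊥ (hher ⊥).1) bot_le
  · intro m n
    apply le_antisymm
    · apply hle
      exact (hher _).2.1 _ _ (hmono le_sup_left (hmem m)) (hmono le_sup_right (hmem n))
    · exact sup_le (hle _ _ ((hher _).2.2 _ _ (hmem (m ⊔ n)) le_sup_left))
        (hle _ _ ((hher _).2.2 _ _ (hmem (m ⊔ n)) le_sup_right))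
  · intro c m
    apply le_antisymm
    · apply hle
      have : m ∈ K (c ⇨ c ⊓ φ m) := hmono (le_himp_iff.mpr (inf_comm (φ m) c).le) (hmem m)
      rw [← hquot] at this
      exact this
    · have h1 : HM.smul c m ∈ K (φ (HM.smul c m)) := hmem _
      have h2 : m ∈ K (c ⇨ φ (HM.smul c m)) := by rw [← hquot]; exact h1
      have h3 : φ m ≤ c ⇨ φ (HM.smul c m) := hle _ _ h2
      calc c ⊓ φ m ≤ c ⊓ (c ⇨ φ (HM.smul c m)) := inf_le_inf_left _ h3
        _ ≤ φ (HM.smul c m) := inf_himp_le
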